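/- Type specialisation: if e is well-typed with type τ under kind context assigning kinds κᵢ to type variables αᵢ and typing context Γ, and each instantiating type ρᵢ has kind κᵢ under Δ, then the substituted expression e[ρᵢ/αᵢ] has type τ[ρᵢ/αᵢ] under Δ and Γ[ρᵢ/αᵢ]. -/

import Mathlib

inductive Perm | D | S | E
deriving DecidableEq

abbrev Kind := Set Perm

inductive Mode | readOnly | writable | unboxed

def kindOf : Mode → Kind
  | .readOnly => {Perm.D, Perm.S}
  | .writable => {Perm.E}
  | .unboxed  => {Perm.D, Perm.S, Perm.E}

/-- Types, including observed type variables `ovar` (written α!). -/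
inductive Ty
  | unit
  | prim
  | fn (a b : Ty)
  | var (n : ℕ)
  | ovar (n : ℕ)
  | variant (ts : List Ty)
  | record (fs : List (Ty × Bool)) (m : Mode)

/-- bang on kinds. -/
noncomputable def bangKind (κ : Kind) : Kind :=
  open Classical in
  if ({Perm.D, Perm.S} : Kind) ⊆ κ then κ else {Perm.D, Perm.S}

/-- bang on modes. -/
def bangMode : Mode → Mode
  | .readOnly => .readOnly
  | .writable => .readOnly
  | .unboxed  => .unboxed

/-- bang on types. -/
def bangTy : Ty → Ty
  | .unit => .unit
  | .prim => .prim
  | .fn a b => .fn a b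
  | .var n => .ovar n
  | .ovar n => .ovar n
  | .variant ts => .variant (ts.attach.map (fun t => bangTy t.1))
  | .record fs m => .record (fs.attach.map (fun p => (bangTy p.1.1, p.1.2))) (bangMode m)
  decreasing_by
  · simp only [Ty.variant.sizeOf_spec]
    have := List.sizeOf_lt_of_mem t.2; omega
  · simp only [Ty.record.sizeOf_spec]
    have := List.sizeOf_lt_of_mem p.2
    cases hp : p.1 with | mk a b => rw [hp] at this; simp at this ⊢; omega

/-- The kinding judgement `Δ ⊢ τ : κ`. -/
inductive Kinding (Δ : ℕ → Kind) : Ty → Kind → Prop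
  | unit : Kinding Δ .unit κ
  | prim : Kinding Δ .prim κ
  | fn : Kinding Δ (.fn a b) κ
  | var : κ ⊆ Δ n → Kinding Δ (.var n) κ
  | ovar : κ ⊆ bangKind (Δ n) → Kinding Δ (.ovar n) κ
  | variant : (∀ t ∈ ts, Kinding Δ t κ) → Kinding Δ (.variant ts) κ
  | record : κ ⊆ kindOf m → (∀ p ∈ fs, p.2 = false → Kinding Δ p.1 κ) →
      Kinding Δ (.record fs m) κ

/-- Substitution of types for type variables; observed variables α! are mapped
    to bang of the substituted type. -/
def substTy (σ : ℕ → Ty) : Ty → Ty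
  | .unit => .unit
  | .prim => .prim
  | .fn a b => .fn (substTy σ a) (substTy σ b)
  | .var n => σ n
  | .ovar n => bangTy (σ n)
  | .variant ts => .variant (ts.attach.map (fun t => substTy σ t.1))
  | .record fs m => .record (fs.attach.map (fun p => (substTy σ p.1.1, p.1.2))) m
  decreasing_by
  · simp only [Ty.fn.sizeOf_spec]; omega
  · simp only [Ty.fn.sizeOf_spec]; omega
  · simp only [Ty.variant.sizeOf_spec]
    have := List.sizeOf_lt_of_mem t.2; omega
  · simp only [Ty.record.sizeOf_spec]
    have := List.sizeOf_lt_of_mem p.2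
    cases hp : p.1 with | mk a b => rw [hp] at this; simp at this ⊢; omega

abbrev Ctx := List (Option Ty)

/-- Context weakening under kind context Δ: dropped bindings must be
    discardable. -/
inductive Weaken (Δ : ℕ → Kind) : Ctx → Ctx → Prop
  | nil : Weaken Δ [] []
  | keep : Weaken Δ Γ Γ' → Weaken Δ (o :: Γ) (o :: Γ')
  | drop : Kinding Δ τ κ → Perm.D ∈ κ → Weaken Δ Γ Γ' →
      Weaken Δ (some τ :: Γ) (none :: Γ')

/-- Context splitting under kind context Δ: duplicated bindings must be
    shareable. -/
inductive Split (Δ : ℕ → Kind) : Ctx → Ctx → Ctx → Prop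
  | nil : Split Δ [] [] []
  | none : Split Δ Γ Γ₁ Γ₂ → Split Δ (none :: Γ) (none :: Γ₁) (none :: Γ₂)
  | left : Split Δ Γ Γ₁ Γ₂ → Split Δ (some τ :: Γ) (some τ :: Γ₁) (none :: Γ₂)
  | right : Split Δ Γ Γ₁ Γ₂ → Split Δ (some τ :: Γ) (none :: Γ₁) (some τ :: Γ₂)
  | both : Kinding Δ τ κ → Perm.S ∈ κ → Split Δ Γ Γ₁ Γ₂ →
      Split Δ (some τ :: Γ) (some τ :: Γ₁) (some τ :: Γ₂)

/-- A context containing exactly one binding, at position n. -/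
def OnlyAt (Γ : Ctx) (n : ℕ) (τ : Ty) : Prop :=
  Γ[n]? = some (some τ) ∧ ∀ m, m ≠ n → ∀ τ', Γ[m]? = some (some τ') → False

/-- A context containing no bindings. -/
def AllNone (Γ : Ctx) : Prop := ∀ o ∈ Γ, o = none

/-- Expressions (de Bruijn term variables), including polymorphic function
    references `f[ρs]` carrying a list of type arguments. -/
inductive Expr
  | var (n : ℕ)
  | unit
  | letE (e₁ e₂ : Expr)
  | fnRef (f : ℕ) (ρs : List Ty)
  | app (e₁ e₂ : Expr)

/-- Interpret a list of type arguments as a substitution for type variables. -/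
def tyArgs (ρs : List Ty) : ℕ → Ty := fun n => ρs.getD n .unit

/-- Signatures assign to each function name the kinds of its quantified type
    variables and its (function) type. -/
abbrev Sig := ℕ → List Kind × Ty

/-- The typing judgement Δ; Γ ⊢ e : τ.  Polymorphic function references
    require the kind constraints of the quantified variables to hold of the
    type arguments. -/
inductive Typing (Sg : Sig) : (ℕ → Kind) → Ctx → Expr → Ty → Prop
  | var : Weaken Δ Γ Γ' → OnlyAt Γ' n τ → Typing Sg Δ Γ (.var n) τ
  | unit : Weaken Δ Γ Γ' → AllNone Γ' → Typing Sg Δ Γ .unit .unit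
  | letE : Split Δ Γ Γ₁ Γ₂ → Typing Sg Δ Γ₁ e₁ ρ →
      Typing Sg Δ (some ρ :: Γ₂) e₂ τ → Typing Sg Δ Γ (.letE e₁ e₂) τ
  | fnRef : Weaken Δ Γ Γ' → AllNone Γ' → Sg f = (κs, τ) →
      ρs.length = κs.length →
      (∀ (i : ℕ) κ ρ, κs[i]? = some κ → ρs[i]? = some ρ → Kinding Δ ρ κ) →
      Typing Sg Δ Γ (.fnRef f ρs) (substTy (tyArgs ρs) τ)
  | app : Split Δ Γ Γ₁ Γ₂ → Typing Sg Δ Γ₁ e₁ (.fn ρ τ) →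
      Typing Sg Δ Γ₂ e₂ ρ → Typing Sg Δ Γ (.app e₁ e₂) τ

/-- Substitution of types for type variables in an expression: acts on the
    type annotations of function references, homomorphically elsewhere. -/
def substExpr (σ : ℕ → Ty) : Expr → Expr
  | .var n => .var n
  | .unit => .unit
  | .letE e₁ e₂ => .letE (substExpr σ e₁) (substExpr σ e₂)
  | .fnRef f ρs => .fnRef f (ρs.map (substTy σ))
  | .app e₁ e₂ => .app (substExpr σ e₁) (substExpr σ e₂)

section Lemmas

lemma bangMode_idem (m : Mode) : bangMode (bangMode m) = bangMode m := by
  cases m <;> rfl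

@[simp] lemma bangTy_unit : bangTy .unit = .unit := by simp [bangTy]
@[simp] lemma bangTy_prim : bangTy .prim = .prim := by simp [bangTy]
@[simp] lemma bangTy_fn (a b : Ty) : bangTy (.fn a b) = .fn a b := by simp [bangTy]
@[simp] lemma bangTy_var (n : ℕ) : bangTy (.var n) = .ovar n := by simp [bangTy]
@[simp] lemma bangTy_ovar (n : ℕ) : bangTy (.ovar n) = .ovar n := by simp [bangTy]
@[simp] lemma substTy_unit (σ : ℕ → Ty) : substTy σ .unit = .unit := by simp [substTy]
@[simp] lemma substTy_prim (σ : ℕ → Ty) : substTy σ .prim = .prim := by simp [substTy]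
@[simp] lemma substTy_fn (σ : ℕ → Ty) (a b : Ty) :
    substTy σ (.fn a b) = .fn (substTy σ a) (substTy σ b) := by simp [substTy]
@[simp] lemma substTy_var (σ : ℕ → Ty) (n : ℕ) : substTy σ (.var n) = σ n := by simp [substTy]
@[simp] lemma substTy_ovar (σ : ℕ → Ty) (n : ℕ) : substTy σ (.ovar n) = bangTy (σ n) := by
  simp [substTy]

lemma bangTy_variant (ts : List Ty) :
    bangTy (.variant ts) = .variant (ts.map bangTy) := by
  rw [bangTy]; congr 1; exact List.attach_map_val (l := ts) (f := bangTy)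

lemma bangTy_record (fs : List (Ty × Bool)) (m : Mode) :
    bangTy (.record fs m) = .record (fs.map (fun p => (bangTy p.1, p.2))) (bangMode m) := by
  rw [bangTy]; congr 1; exact List.attach_map_val (l := fs) (f := fun p => (bangTy p.1, p.2))

lemma substTy_variant (σ : ℕ → Ty) (ts : List Ty) :
    substTy σ (.variant ts) = .variant (ts.map (substTy σ)) := by
  rw [substTy]; congr 1; exact List.attach_map_val (l := ts) (f := substTy σ)

lemma substTy_record (σ : ℕ → Ty) (fs : List (Ty × Bool)) (m : Mode) :
    substTy σ (.record fs m) = .record (fs.map (fun p => (substTy σ p.1, p.2))) m := by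
  rw [substTy]; congr 1; exact List.attach_map_val (l := fs) (f := fun p => (substTy σ p.1, p.2))

theorem bangTy_idem : ∀ t : Ty, bangTy (bangTy t) = bangTy t
  | .unit => by simp [bangTy]
  | .prim => by simp [bangTy]
  | .fn a b => by simp [bangTy]
  | .var n => by simp [bangTy]
  | .ovar n => by simp [bangTy]
  | .variant ts => by
      rw [bangTy_variant, bangTy_variant, List.map_map]
      congr 1
      refine List.map_congr_left (fun t ht => ?_)
      exact bangTy_idem t
  | .record fs m => by
      rw [bangTy_record, bangTy_record, List.map_map, bangMode_idem]
      congr 1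
      refine List.map_congr_left (fun p hp => ?_)
      simp only [Function.comp]
      rw [bangTy_idem p.1]
  decreasing_by
  · have := List.sizeOf_lt_of_mem ht; simp; omega
  · have := List.sizeOf_lt_of_mem hp
    cases hq : p with | mk a b => rw [hq] at this; simp at this ⊢; omega

theorem substTy_bangTy (σ : ℕ → Ty) : ∀ t : Ty,
    substTy σ (bangTy t) = bangTy (substTy σ t)
  | .unit => by simp [bangTy, substTy]
  | .prim => by simp [bangTy, substTy]
  | .fn a b => by simp [bangTy, substTy]
  | .var n => by simp [bangTy, substTy]
  | .ovar n => by
      simp only [bangTy, substTy]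
      rw [bangTy_idem]
  | .variant ts => by
      rw [bangTy_variant, substTy_variant, substTy_variant, bangTy_variant,
        List.map_map, List.map_map]
      congr 1
      refine List.map_congr_left (fun t ht => ?_)
      exact substTy_bangTy σ t
  | .record fs m => by
      rw [bangTy_record, substTy_record, substTy_record, bangTy_record,
        List.map_map, List.map_map]
      congr 1
      refine List.map_congr_left (fun p hp => ?_)
      simp only [Function.comp]
      rw [substTy_bangTy σ p.1]
  decreasing_by
  · have := List.sizeOf_lt_of_mem ht; simp; omega
  · have := List.sizeOf_lt_of_mem hp
    cases hq : p with | mk a b => rw [hq] at this; simp at this ⊢; omega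

theorem substTy_comp (σ σ' : ℕ → Ty) : ∀ t : Ty,
    substTy σ (substTy σ' t) = substTy (fun n => substTy σ (σ' n)) t
  | .unit => by simp [substTy]
  | .prim => by simp [substTy]
  | .fn a b => by
      simp only [substTy]
      rw [substTy_comp σ σ' a, substTy_comp σ σ' b]
  | .var n => by simp [substTy]
  | .ovar n => by
      simp only [substTy]
      exact substTy_bangTy σ (σ' n)
  | .variant ts => by
      rw [substTy_variant, substTy_variant, substTy_variant, List.map_map]
      congr 1
      refine List.map_congr_left (fun t ht => ?_)
      exact substTy_comp σ σ' t
  | .record fs m => by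
      rw [substTy_record, substTy_record, substTy_record, List.map_map]
      congr 1
      refine List.map_congr_left (fun p hp => ?_)
      simp only [Function.comp]
      rw [substTy_comp σ σ' p.1]
  decreasing_by
  · simp only [Ty.fn.sizeOf_spec]; omega
  · simp only [Ty.fn.sizeOf_spec]; omega
  · have := List.sizeOf_lt_of_mem ht; simp; omega
  · have := List.sizeOf_lt_of_mem hp
    cases hq : p with | mk a b => rw [hq] at this; simp at this ⊢; omega

lemma bangKind_superset (κ : Kind) : ({Perm.D, Perm.S} : Kind) ⊆ bangKind κ := by
  unfold bangKind
  split <;> simp_all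

lemma bangKind_mono {κ κ' : Kind} (h : κ ⊆ κ') : bangKind κ ⊆ bangKind κ' := by
  unfold bangKind
  split
  · split
    · exact h
    · rename_i h1 h2; exact absurd (h1.trans h) h2
  · split
    · assumption
    · exact subset_rfl

lemma bangKind_idem (κ : Kind) : bangKind (bangKind κ) = bangKind κ := by
  have h := bangKind_superset κ
  unfold bangKind at h ⊢
  rw [if_pos h]

lemma Kinding.mono {Δ : ℕ → Kind} {τ : Ty} {κ κ' : Kind} (hs : κ ⊆ κ')
    (h : Kinding Δ τ κ') : Kinding Δ τ κ := by
  induction h with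
  | unit => exact .unit
  | prim => exact .prim
  | fn => exact .fn
  | var h => exact .var (hs.trans h)
  | ovar h => exact .ovar (hs.trans h)
  | variant h ih => exact .variant (fun t ht => ih t ht hs)
  | record h1 h2 ih => exact .record (hs.trans h1) (fun p hp hb => ih p hp hb hs)

lemma Kinding.bang {Δ : ℕ → Kind} {τ : Ty} {κ : Kind}
    (h : Kinding Δ τ κ) : Kinding Δ (bangTy τ) (bangKind κ) := by
  induction h with
  | unit => simpa using (Kinding.unit : Kinding Δ .unit (bangKind _))
  | prim => simpa using (Kinding.prim : Kinding Δ .prim (bangKind _))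
  | fn => simpa using (Kinding.fn : Kinding Δ (.fn _ _) (bangKind _))
  | var h => simpa using (Kinding.ovar (bangKind_mono h) : Kinding Δ (.ovar _) (bangKind _))
  | ovar h =>
      rw [bangTy_ovar]
      refine .ovar ?_
      have := bangKind_mono h
      rwa [bangKind_idem] at this
  | variant h ih =>
      rw [bangTy_variant]
      refine .variant (fun t ht => ?_)
      obtain ⟨t', ht', rfl⟩ := List.mem_map.1 ht
      exact ih t' ht'
  | @record κ m fs h1 h2 ih =>
      rw [bangTy_record]
      refine .record ?_ (fun p hp hb => ?_)
      · cases m with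
        | readOnly =>
            unfold bangKind
            split
            · simpa [kindOf, bangMode] using h1
            · simp [kindOf, bangMode]
        | writable =>
            unfold bangKind
            have : ¬ ({Perm.D, Perm.S} : Kind) ⊆ κ := by
              intro hc
              have : Perm.D ∈ kindOf Mode.writable := h1 (hc (by simp))
              simp [kindOf] at this
            rw [if_neg this]
            simp [kindOf, bangMode]
        | unboxed =>
            unfold bangKind
            split
            · exact h1
            · simp [kindOf, bangMode]
      · obtain ⟨p', hp', rfl⟩ := List.mem_map.1 hp
        exact ih p' hp' hb

lemma Kinding.subst {Δ₀ Δ : ℕ → Kind} {σ : ℕ → Ty} {τ : Ty} {κ : Kind}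
    (hσ : ∀ n, Kinding Δ (σ n) (Δ₀ n))
    (h : Kinding Δ₀ τ κ) : Kinding Δ (substTy σ τ) κ := by
  induction h with
  | unit => rw [substTy_unit]; exact .unit
  | prim => rw [substTy_prim]; exact .prim
  | fn => rw [substTy_fn]; exact .fn
  | var h => rw [substTy_var]; exact (hσ _).mono h
  | ovar h => rw [substTy_ovar]; exact ((hσ _).bang).mono h
  | variant h ih =>
      rw [substTy_variant]
      refine .variant (fun t ht => ?_)
      obtain ⟨t', ht', rfl⟩ := List.mem_map.1 ht
      exact ih t' ht'
  | record h1 h2 ih =>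
      rw [substTy_record]
      refine .record h1 (fun p hp hb => ?_)
      obtain ⟨p', hp', rfl⟩ := List.mem_map.1 hp
      exact ih p' hp' hb

lemma Weaken.subst {Δ₀ Δ : ℕ → Kind} {σ : ℕ → Ty} {Γ Γ' : Ctx}
    (hσ : ∀ n, Kinding Δ (σ n) (Δ₀ n)) (h : Weaken Δ₀ Γ Γ') :
    Weaken Δ (Γ.map (Option.map (substTy σ))) (Γ'.map (Option.map (substTy σ))) := by
  induction h with
  | nil => exact .nil
  | keep _ ih => exact .keep ih
  | drop hk hd _ ih => exact .drop (hk.subst hσ) hd ih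

lemma Split.subst {Δ₀ Δ : ℕ → Kind} {σ : ℕ → Ty} {Γ Γ₁ Γ₂ : Ctx}
    (hσ : ∀ n, Kinding Δ (σ n) (Δ₀ n)) (h : Split Δ₀ Γ Γ₁ Γ₂) :
    Split Δ (Γ.map (Option.map (substTy σ))) (Γ₁.map (Option.map (substTy σ)))
      (Γ₂.map (Option.map (substTy σ))) := by
  induction h with
  | nil => exact .nil
  | none _ ih => exact .none ih
  | left _ ih => exact .left ih
  | right _ ih => exact .right ih
  | both hk hs _ ih => exact .both (hk.subst hσ) hs ih

lemma OnlyAt.map {Γ : Ctx} {n : ℕ} {τ : Ty} (f : Ty → Ty) (h : OnlyAt Γ n τ) :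
    OnlyAt (Γ.map (Option.map f)) n (f τ) := by
  obtain ⟨h1, h2⟩ := h
  constructor
  · rw [List.getElem?_map, h1]; rfl
  · intro m hm τ' hτ'
    rw [List.getElem?_map] at hτ'
    cases he : Γ[m]? with
    | none => rw [he] at hτ'; simp at hτ'
    | some o =>
        rw [he] at hτ'
        cases o with
        | none => simp at hτ'
        | some t => exact h2 m hm t he

lemma AllNone.map {Γ : Ctx} (f : Ty → Ty) (h : AllNone Γ) :
    AllNone (Γ.map (Option.map f)) := by
  intro o ho
  obtain ⟨o', ho', rfl⟩ := List.mem_map.1 ho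
  rw [h o' ho']; rfl

lemma tyArgs_map (σ : ℕ → Ty) (ρs : List Ty) (n : ℕ) :
    tyArgs (ρs.map (substTy σ)) n = substTy σ (tyArgs ρs n) := by
  simp only [tyArgs]
  simpa using List.getD_map ρs Ty.unit (substTy σ) (n := n)

end Lemmas


/-- Type specialisation: a well-typed expression remains well-typed after
    instantiating its type variables with types of the required kinds. -/
theorem type_specialisation {Sg : Sig} {Δ₀ Δ : ℕ → Kind} {Γ : Ctx}
    {e : Expr} {τ : Ty} {σ : ℕ → Ty}
    (ht : Typing Sg Δ₀ Γ e τ)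
    (hσ : ∀ n, Kinding Δ (σ n) (Δ₀ n)) :
    Typing Sg Δ (Γ.map (Option.map (substTy σ))) (substExpr σ e)
      (substTy σ τ) := by
  induction ht with
  | var hw ho => exact .var (hw.subst hσ) (ho.map (substTy σ))
  | unit hw hn =>
      rw [substTy_unit]
      exact .unit (hw.subst hσ) (hn.map (substTy σ))
  | letE hs h1 h2 ih1 ih2 => exact .letE (hs.subst hσ) ih1 (by simpa using ih2)
  | fnRef hw hn hsg hlen hk =>
      rename_i Γ' Γ'' f κs τ ρs
      have he : substTy (tyArgs (List.map (substTy σ) ρs)) τ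
          = substTy σ (substTy (tyArgs ρs) τ) := by
        rw [substTy_comp]
        congr 1
        funext n
        exact tyArgs_map σ ρs n
      have ht' : Typing Sg Δ (Γ'.map (Option.map (substTy σ)))
          (.fnRef f (ρs.map (substTy σ)))
          (substTy (tyArgs (ρs.map (substTy σ))) τ) := by
        refine Typing.fnRef (hw.subst hσ) (hn.map (substTy σ)) hsg (by simp [hlen])
          (fun i κ ρ hκ hρ => ?_)
        rw [List.getElem?_map] at hρ
        cases hg : ρs[i]? with
        | none => rw [hg] at hρ; simp at hρ
        | some ρ₀ =>
            rw [hg] at hρ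
            simp at hρ
            subst hρ
            exact (hk i κ ρ₀ hκ hg).subst hσ
      rw [← he]
      exact ht'
  | app hs h1 h2 ih1 ih2 => exact .app (hs.subst hσ) (by simpa using ih1) ih2
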